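/- Fix s = 1/√2 and reals x₀, y₀, and let T = {z : x₀ ≤ x(z) ≤ x₀+s and y₀ ≤ y(z) ≤ (y₀ + s − √(7/8)) + √(1 − (x(z) − x₀ − s/2)²)}. Then for every point q with y(q) ≤ y₀, the set {z : dist(z,q) = 1} ∩ T is preconnected, and every point z of this set satisfies y(z) ≥ y(q). (This is the paper's claim that for any unit disk D whose center lies on or below the line y = y₀, the intersection of ∂D with the extended cell T is either empty or a single arc lying on the upper half-circle of ∂D.) -/

import Mathlib

lemma quad_between (c K t1 t2 t : ℝ) (h1 : t1 ≤ t) (h2 : t ≤ t2)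
    (ha : (t1 - c)^2 ≤ K) (hb : (t2 - c)^2 ≤ K) : (t - c)^2 ≤ K := by
  nlinarith [mul_nonneg (sub_nonneg.2 h1) (sub_nonneg.2 h2), sq_nonneg (t - t1), sq_nonneg (t2 - t)]

lemma core_contra (e1 e2 δ xa wa xb wb xt wt : ℝ) (hδ : 0 < δ) (he2 : e2 ≤ δ)
    (ca : (xa - e1)^2 + (wa - e2)^2 = 1) (na : xa^2 + wa^2 = 1)
    (cb : (xb - e1)^2 + (wb - e2)^2 = 1) (nb : xb^2 + wb^2 = 1)
    (ct : (xt - e1)^2 + (wt - e2)^2 = 1) (nt : 1 < xt^2 + wt^2)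
    (hwa : δ ≤ wa) (hwb : δ ≤ wb) (hab : xa ≠ xb) : False := by
  have la : 2*(e1*xa + e2*wa) = e1^2 + e2^2 := by linear_combination na - ca
  have lb : 2*(e1*xb + e2*wb) = e1^2 + e2^2 := by linear_combination nb - cb
  have lt : e1^2 + e2^2 < 2*(e1*xt + e2*wt) := by nlinarith [ct, nt]
  have key : (xa - xb) * (e1*(wa + wb) - e2*(xa + xb)) = 0 := by
    linear_combination ((wa+wb)/2) * la - ((wa+wb)/2) * lb - e2 * na + e2 * nb
  have hsum : e1*(xa+xb) + e2*(wa+wb) = e1^2+e2^2 := by linear_combination (la + lb)/2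
  have key2 : e1*(wa+wb) = e2*(xa+xb) := by
    rcases mul_eq_zero.1 key with h | h
    · exact absurd (sub_eq_zero.1 h) hab
    · linarith
  have hE : (e1^2+e2^2) * (wa+wb) = (e1^2+e2^2) * e2 := by
    linear_combination e1 * key2 + e2 * hsum
  rcases eq_or_ne (e1^2+e2^2) 0 with hE0 | hE0
  · have q1 : e1^2 = 0 := by linarith [sq_nonneg e1, sq_nonneg e2]
    have q2 : e2^2 = 0 := by linarith [sq_nonneg e1, sq_nonneg e2]
    have h1 : e1 = 0 := by exact pow_eq_zero_iff (two_ne_zero) |>.mp q1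
    have h2 : e2 = 0 := by exact pow_eq_zero_iff (two_ne_zero) |>.mp q2
    rw [h1, h2] at lt; norm_num at lt
  · have : wa + wb = e2 := mul_left_cancel₀ hE0 hE
    linarith

lemma cond3_between (q0 q1 m c y₀ t1 t2 t : ℝ)
    (hy : q1 ≤ y₀) (hc : c < y₀)
    (h12 : t1 ≤ t) (h2 : t ≤ t2)
    (hu1 : (y₀ - q1)^2 ≤ 1 - (t1 - q0)^2)
    (hu2 : (y₀ - q1)^2 ≤ 1 - (t2 - q0)^2)
    (hp1 : (t1 - m)^2 + (q1 + Real.sqrt (1 - (t1-q0)^2) - c)^2 ≤ 1)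
    (hp2 : (t2 - m)^2 + (q1 + Real.sqrt (1 - (t2-q0)^2) - c)^2 ≤ 1) :
    (t - m)^2 + (q1 + Real.sqrt (1 - (t-q0)^2) - c)^2 ≤ 1 := by
  set r0 := y₀ - q1 with hr0
  have hr0n : 0 ≤ r0 := by linarith
  set φ : ℝ → ℝ := fun x => (x-m)^2 + (q1 + Real.sqrt (1 - (x - q0)^2) - c)^2 - 1 with hφ
  have hcont : Continuous φ := by fun_prop
  -- key facts valid for any point x between t1 and t2
  have hmid : ∀ x, t1 ≤ x → x ≤ t2 →
      (x - q0)^2 ≤ 1 - r0^2 ∧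
      Real.sqrt (1 - (x - q0)^2)^2 = 1 - (x-q0)^2 ∧
      r0 ≤ Real.sqrt (1 - (x - q0)^2) := by
    intro x hx1 hx2
    have h1 : (x - q0)^2 ≤ 1 - r0^2 :=
      quad_between q0 (1 - r0^2) t1 t2 x hx1 hx2 (by linarith) (by linarith)
    have h2 : (0:ℝ) ≤ 1 - (x - q0)^2 := by nlinarith [sq_nonneg r0]
    refine ⟨h1, Real.sq_sqrt h2, ?_⟩
    calc r0 = Real.sqrt (r0^2) := (Real.sqrt_sq hr0n).symm
      _ ≤ _ := Real.sqrt_le_sqrt (by linarith)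
  by_contra hcon
  push_neg at hcon
  have hpt : 0 < φ t := by simp only [hφ]; linarith
  have hp1' : φ t1 ≤ 0 := by simp only [hφ]; linarith
  have hp2' : φ t2 ≤ 0 := by simp only [hφ]; linarith
  obtain ⟨a, ha_mem, ha0⟩ := intermediate_value_Icc h12 hcont.continuousOn
    (Set.mem_Icc.2 ⟨hp1', le_of_lt hpt⟩)
  obtain ⟨b, hb_mem, hb0⟩ := intermediate_value_Icc' h2 hcont.continuousOn
    (Set.mem_Icc.2 ⟨hp2', le_of_lt hpt⟩)
  obtain ⟨ha1, ha2⟩ := ha_mem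
  obtain ⟨hb1, hb2⟩ := hb_mem
  have hat : a ≠ t := fun h => by rw [h] at ha0; linarith
  have hbt : b ≠ t := fun h => by rw [h] at hb0; linarith
  obtain ⟨hA1, hA2, hA3⟩ := hmid a ha1 (le_trans ha2 h2)
  obtain ⟨hB1, hB2, hB3⟩ := hmid b (le_trans h12 hb1) hb2
  obtain ⟨hT1, hT2, hT3⟩ := hmid t h12 h2
  set ua := Real.sqrt (1 - (a - q0)^2)
  set ub := Real.sqrt (1 - (b - q0)^2)
  set ut := Real.sqrt (1 - (t - q0)^2)
  have hφa : φ a = (a-m)^2 + (q1 + ua - c)^2 - 1 := rfl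
  have hφb : φ b = (b-m)^2 + (q1 + ub - c)^2 - 1 := rfl
  refine core_contra (q0 - m) (q1 - c) (y₀ - c) (a - m) (q1 + ua - c) (b - m) (q1 + ub - c)
    (t - m) (q1 + ut - c) (by linarith) (by linarith)
    (by linear_combination hA2) (by rw [hφa] at ha0; linarith)
    (by linear_combination hB2) (by rw [hφb] at hb0; linarith)
    (by linear_combination hT2) (by simp only [hφ] at hpt; linarith)
    (by linarith) (by linarith) ?_
  have : a < t := lt_of_le_of_ne ha2 hat
  have : t < b := lt_of_le_of_ne hb1 (Ne.symm hbt)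
  intro h
  have : a = b := by linarith [sub_left_injective.eq_iff.1 h]
  linarith

lemma aux_sq (x lo s : ℝ) (h1 : lo ≤ x) (h2 : x ≤ lo + s) (h3 : 0 < s) (h4 : s ≤ 1) :
    (x - lo - s/2)^2 ≤ 1 := by nlinarith


/-- The Euclidean plane. -/
abbrev Plane := EuclideanSpace ℝ (Fin 2)

set_option maxHeartbeats 1000000 in
/-- For any unit circle whose center lies on or below the line `y = y₀`, its
intersection with the extended cell `T` (the square of side `1/√2` enlarged by
replacing its top edge with a unit-circle arc) is preconnected (a single arc,
or empty) and lies on the upper half-circle. -/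
theorem circle_inter_extended_cell_is_single_upper_arc (x₀ y₀ : ℝ) :
    let s : ℝ := 1 / Real.sqrt 2
    let T : Set Plane := {z : Plane | x₀ ≤ z 0 ∧ z 0 ≤ x₀ + s ∧ y₀ ≤ z 1 ∧
      z 1 ≤ (y₀ + s - Real.sqrt (7 / 8)) + Real.sqrt (1 - (z 0 - x₀ - s / 2) ^ 2)}
    ∀ q : Plane, q 1 ≤ y₀ →
      IsPreconnected ({z : Plane | dist z q = 1} ∩ T) ∧
      ∀ z ∈ {z : Plane | dist z q = 1} ∩ T, z 1 ≥ q 1 := by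
  intro s T q hq
  have hs2 : (0:ℝ) < Real.sqrt 2 := Real.sqrt_pos.2 (by norm_num)
  have hs_def : s = 1 / Real.sqrt 2 := rfl
  have hs_pos : 0 < s := by rw [hs_def]; positivity
  have hs_le : s ≤ 1 := by
    rw [hs_def, div_le_one hs2]
    exact (Real.le_sqrt (by norm_num) (by norm_num)).2 (by norm_num)
  have hδ : 0 < Real.sqrt (7/8) - s := by
    rw [hs_def, one_div, ← Real.sqrt_inv]
    have h := Real.sqrt_lt_sqrt (by norm_num : (0:ℝ) ≤ 2⁻¹) (by norm_num : (2:ℝ)⁻¹ < 7/8)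
    linarith
  set c : ℝ := y₀ + s - Real.sqrt (7/8) with hc
  have hcy : c < y₀ := by rw [hc]; linarith
  set f : ℝ → Plane :=
    fun t => (EuclideanSpace.equiv (Fin 2) ℝ).symm ![t, q 1 + Real.sqrt (1 - (t - q 0)^2)]
    with hf
  have hfc : Continuous f := by
    rw [hf]
    apply Continuous.comp (ContinuousLinearEquiv.continuous _)
    apply continuous_pi; intro i; fin_cases i
    · simpa using continuous_id'
    · show Continuous fun a : ℝ => q 1 + Real.sqrt (1 - (a - q 0)^2)
      fun_prop
  have hdist : ∀ z : Plane, dist z q = Real.sqrt ((z 0 - q 0)^2 + (z 1 - q 1)^2) := by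
    intro z; rw [EuclideanSpace.dist_eq, Fin.sum_univ_two]; simp [Real.dist_eq, sq_abs]
  have fdist : ∀ t : ℝ, (t - q 0)^2 ≤ 1 → dist (f t) q = 1 := by
    intro t ht
    rw [hdist]
    have h1 : f t 0 = t := rfl
    have h2 : f t 1 = q 1 + Real.sqrt (1 - (t - q 0)^2) := rfl
    rw [h1, h2,
      show q 1 + Real.sqrt (1 - (t - q 0)^2) - q 1 = Real.sqrt (1 - (t - q 0)^2) by ring,
      Real.sq_sqrt (by linarith : (0:ℝ) ≤ 1 - (t - q 0)^2),
      show (t - q 0)^2 + (1 - (t - q 0)^2) = 1 by ring, Real.sqrt_one]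
  have fdist' : ∀ t : ℝ, dist (f t) q = 1 → (t - q 0)^2 ≤ 1 := by
    intro t ht
    rw [hdist] at ht
    have h1 : f t 0 = t := rfl
    have h2 : f t 1 = q 1 + Real.sqrt (1 - (t - q 0)^2) := rfl
    rw [h1, h2] at ht
    have h0 : (0:ℝ) ≤ (t - q 0)^2 + (q 1 + Real.sqrt (1 - (t - q 0)^2) - q 1)^2 := by positivity
    have hX := Real.sq_sqrt h0
    rw [ht] at hX
    nlinarith [sq_nonneg (q 1 + Real.sqrt (1 - (t - q 0)^2) - q 1)]
  set A : Set ℝ := {t | dist (f t) q = 1 ∧ f t ∈ T} with hA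
  constructor
  · -- preconnectedness
    have himg : {z : Plane | dist z q = 1} ∩ T = f '' A := by
      ext z; constructor
      · rintro ⟨hz1, hz2⟩
        have hz1' : dist z q = 1 := hz1
        have hz2' : z ∈ T := hz2
        obtain ⟨hx1, hx2, hy1, hy2⟩ :
            x₀ ≤ z 0 ∧ z 0 ≤ x₀ + s ∧ y₀ ≤ z 1 ∧
              z 1 ≤ (y₀ + s - Real.sqrt (7/8)) + Real.sqrt (1 - (z 0 - x₀ - s/2)^2) := hz2
        have h0 : (0:ℝ) ≤ (z 0 - q 0)^2 + (z 1 - q 1)^2 := by positivity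
        have hsq : (z 0 - q 0)^2 + (z 1 - q 1)^2 = 1 := by
          have h := hdist z ▸ hz1'
          have hX := Real.sq_sqrt h0
          rw [h] at hX; linarith
        have hz1q : 0 ≤ z 1 - q 1 := by linarith
        have hroot : Real.sqrt (1 - (z 0 - q 0)^2) = z 1 - q 1 := by
          rw [show 1 - (z 0 - q 0)^2 = (z 1 - q 1)^2 by linarith]
          exact Real.sqrt_sq hz1q
        have hfz : f (z 0) = z := by
          refine PiLp.ext fun i => ?_
          fin_cases i
          · rfl
          · show f (z 0) 1 = z 1
            have : f (z 0) 1 = q 1 + Real.sqrt (1 - (z 0 - q 0)^2) := rfl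
            rw [this, hroot]; ring
        exact ⟨z 0, ⟨by rw [hfz]; exact hz1', by rw [hfz]; exact hz2'⟩, hfz⟩
      · rintro ⟨t, ⟨ht1, ht2⟩, rfl⟩; exact ⟨ht1, ht2⟩
    rw [himg]
    apply IsPreconnected.image _ f hfc.continuousOn
    apply Set.OrdConnected.isPreconnected
    constructor
    intro t1 ht1 t2 ht2 t ht
    obtain ⟨htl, htr⟩ := Set.mem_Icc.1 ht
    obtain ⟨hd1, hT1⟩ := ht1
    obtain ⟨hd2, hT2⟩ := ht2
    obtain ⟨ha1, ha2, ha3, ha4⟩ :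
        x₀ ≤ t1 ∧ t1 ≤ x₀ + s ∧ y₀ ≤ q 1 + Real.sqrt (1 - (t1 - q 0)^2) ∧
          q 1 + Real.sqrt (1 - (t1 - q 0)^2) ≤
            (y₀ + s - Real.sqrt (7/8)) + Real.sqrt (1 - (t1 - x₀ - s/2)^2) := hT1
    obtain ⟨hb1, hb2, hb3, hb4⟩ :
        x₀ ≤ t2 ∧ t2 ≤ x₀ + s ∧ y₀ ≤ q 1 + Real.sqrt (1 - (t2 - q 0)^2) ∧
          q 1 + Real.sqrt (1 - (t2 - q 0)^2) ≤
            (y₀ + s - Real.sqrt (7/8)) + Real.sqrt (1 - (t2 - x₀ - s/2)^2) := hT2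
    have hsq1 : (t1 - q 0)^2 ≤ 1 := fdist' t1 hd1
    have hsq2 : (t2 - q 0)^2 ≤ 1 := fdist' t2 hd2
    have hu1 : Real.sqrt (1 - (t1 - q 0)^2)^2 = 1 - (t1 - q 0)^2 :=
      Real.sq_sqrt (by linarith)
    have hu2 : Real.sqrt (1 - (t2 - q 0)^2)^2 = 1 - (t2 - q 0)^2 :=
      Real.sq_sqrt (by linarith)
    have hr0 : (0:ℝ) ≤ y₀ - q 1 := by linarith
    -- squared cond-2 at the endpoints
    have hc21 : (y₀ - q 1)^2 ≤ 1 - (t1 - q 0)^2 := by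
      have h := pow_le_pow_left₀ hr0 (by linarith : y₀ - q 1 ≤ Real.sqrt (1 - (t1 - q 0)^2)) 2
      linarith
    have hc22 : (y₀ - q 1)^2 ≤ 1 - (t2 - q 0)^2 := by
      have h := pow_le_pow_left₀ hr0 (by linarith : y₀ - q 1 ≤ Real.sqrt (1 - (t2 - q 0)^2)) 2
      linarith
    have hc2t : (y₀ - q 1)^2 ≤ 1 - (t - q 0)^2 := by
      have := quad_between (q 0) (1 - (y₀ - q 1)^2) t1 t2 t htl htr
        (by linarith) (by linarith)
      linarith
    have htsq : (t - q 0)^2 ≤ 1 := by linarith [hc2t, sq_nonneg (y₀ - q 1)]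
    have hut : Real.sqrt (1 - (t - q 0)^2)^2 = 1 - (t - q 0)^2 :=
      Real.sq_sqrt (by linarith)
    have hutr : y₀ - q 1 ≤ Real.sqrt (1 - (t - q 0)^2) := by
      calc y₀ - q 1 = Real.sqrt ((y₀ - q 1)^2) := (Real.sqrt_sq hr0).symm
        _ ≤ _ := Real.sqrt_le_sqrt (by linarith)
    -- cond 3 at the endpoints, squared
    have harg1 : (0:ℝ) ≤ 1 - (t1 - x₀ - s/2)^2 := by
      linarith [aux_sq t1 x₀ s ha1 ha2 hs_pos hs_le]
    have harg2 : (0:ℝ) ≤ 1 - (t2 - x₀ - s/2)^2 := by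
      linarith [aux_sq t2 x₀ s hb1 hb2 hs_pos hs_le]
    have hargt : (0:ℝ) ≤ 1 - (t - x₀ - s/2)^2 := by
      linarith [aux_sq t x₀ s (by linarith) (by linarith) hs_pos hs_le]
    have hδ1 : 0 ≤ q 1 + Real.sqrt (1 - (t1 - q 0)^2) - c := by rw [hc]; linarith
    have hδ2 : 0 ≤ q 1 + Real.sqrt (1 - (t2 - q 0)^2) - c := by rw [hc]; linarith
    have hp1 : (t1 - (x₀ + s/2))^2 + (q 1 + Real.sqrt (1 - (t1 - q 0)^2) - c)^2 ≤ 1 := by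
      have h := (Real.le_sqrt hδ1 harg1).1 (by rw [hc]; linarith)
      have e : (t1 - (x₀ + s/2))^2 = (t1 - x₀ - s/2)^2 := by ring
      linarith
    have hp2 : (t2 - (x₀ + s/2))^2 + (q 1 + Real.sqrt (1 - (t2 - q 0)^2) - c)^2 ≤ 1 := by
      have h := (Real.le_sqrt hδ2 harg2).1 (by rw [hc]; linarith)
      have e : (t2 - (x₀ + s/2))^2 = (t2 - x₀ - s/2)^2 := by ring
      linarith
    have hp := cond3_between (q 0) (q 1) (x₀ + s/2) c y₀ t1 t2 t hq hcy htl htr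
      hc21 hc22 hp1 hp2
    -- assemble conditions at t
    have hxt1 : x₀ ≤ t := by linarith
    have hxt2 : t ≤ x₀ + s := by linarith
    have hyt : y₀ ≤ q 1 + Real.sqrt (1 - (t - q 0)^2) := by linarith
    have hδt : 0 ≤ q 1 + Real.sqrt (1 - (t - q 0)^2) - c := by rw [hc]; linarith
    have hcond3 : q 1 + Real.sqrt (1 - (t - q 0)^2) ≤
        (y₀ + s - Real.sqrt (7/8)) + Real.sqrt (1 - (t - x₀ - s/2)^2) := by
      have h1 : (q 1 + Real.sqrt (1 - (t - q 0)^2) - c)^2 ≤ 1 - (t - x₀ - s/2)^2 := by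
        have e : (t - (x₀ + s/2))^2 = (t - x₀ - s/2)^2 := by ring
        linarith
      have h2 : q 1 + Real.sqrt (1 - (t - q 0)^2) - c ≤ Real.sqrt (1 - (t - x₀ - s/2)^2) := by
        calc q 1 + Real.sqrt (1 - (t - q 0)^2) - c
            = Real.sqrt ((q 1 + Real.sqrt (1 - (t - q 0)^2) - c)^2) := (Real.sqrt_sq hδt).symm
          _ ≤ _ := Real.sqrt_le_sqrt h1
      rw [hc] at h2; linarith
    refine ⟨fdist t htsq, ?_⟩
    show x₀ ≤ f t 0 ∧ f t 0 ≤ x₀ + s ∧ y₀ ≤ f t 1 ∧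
      f t 1 ≤ (y₀ + s - Real.sqrt (7/8)) + Real.sqrt (1 - (f t 0 - x₀ - s/2)^2)
    have e0 : f t 0 = t := rfl
    have e1 : f t 1 = q 1 + Real.sqrt (1 - (t - q 0)^2) := rfl
    rw [e0, e1]
    exact ⟨hxt1, hxt2, hyt, hcond3⟩
  · rintro z ⟨_, hzT⟩
    have h : y₀ ≤ z 1 := hzT.2.2.1
    linarith
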